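/- If a *-graph contains a Vassiliev obstruct, then it admits no *-embedding into the plane. -/

import Mathlib

/-!
We model a finite multigraph combinatorially by its half-edges ("darts"):
`edgeInv` is a fixed-point-free involution pairing the two darts of each edge,
and the vertices are the cycles of the permutation `rot`; the cycle of `rot`
through a dart is a chosen orientation of the unoriented cyclic order
(the *-structure) at that vertex.  All notions defined below are invariant
under reversing the chosen orientation at a vertex, so such a structure
faithfully represents a *-graph.  An embedding of the graph into the sphere
(equivalently, the plane) is modelled, as usual in topological graph theory,
by a rotation system whose Euler characteristic is `2` on every connected
component; it is a *-embedding when the rotation at each vertex agrees with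
the *-structure or with its reversal.
-/

/-- A *-graph, encoded by half-edges (darts). -/
structure StarGraph where
  /-- the type of darts (half-edges) -/
  D : Type
  [fintypeD : Fintype D]
  [decEqD : DecidableEq D]
  /-- the fixed-point-free involution matching the two darts of each edge -/
  edgeInv : Equiv.Perm D
  /-- a permutation whose cycles are the vertices; its cycle through a dart is a
  chosen orientation of the unoriented cyclic order (*-structure) at that vertex -/
  rot : Equiv.Perm D
  edgeInv_invol : ∀ d, edgeInv (edgeInv d) = d
  edgeInv_ne : ∀ d, edgeInv d ≠ d

attribute [instance] StarGraph.fintypeD StarGraph.decEqD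

namespace StarGraph

variable (G : StarGraph)

/-- Two darts emanate from the same vertex iff they lie on the same cycle of `rot`. -/
def SameVertex (d e : G.D) : Prop := G.rot.SameCycle d e

/-- The degree of the vertex from which the dart `d` emanates. -/
noncomputable def degree (d : G.D) : ℕ := Nat.card {e : G.D // G.SameVertex d e}

/-- The number of cycles (orbits, including fixed points) of a permutation. -/
noncomputable def cycleCount {α : Type*} (f : Equiv.Perm α) : ℕ :=
  Nat.card (Quotient (Equiv.Perm.SameCycle.setoid f))

/-- The number of vertices. -/
noncomputable def numVertices : ℕ := cycleCount G.rot

/-- The number of edges. -/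
noncomputable def numEdges : ℕ := Fintype.card G.D / 2

/-- The number of connected components. -/
noncomputable def numComponents : ℕ :=
  Nat.card (Quotient (Relation.EqvGen.setoid (fun d e : G.D => e = G.rot d ∨ e = G.edgeInv d)))

/-- The number of faces of the embedding determined by the rotation system `ρ`:
the number of cycles of the face permutation `ρ * edgeInv`. -/
noncomputable def numFaces (ρ : Equiv.Perm G.D) : ℕ := cycleCount (ρ * G.edgeInv)

/-- `ρ` is a rotation system compatible with the *-structure:  at each vertex it
agrees with the chosen orientation of the cyclic order or with its reversal. -/
def IsCompatibleRotation (ρ : Equiv.Perm G.D) : Prop :=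
  ∀ d : G.D, (∀ e, G.SameVertex d e → ρ e = G.rot e) ∨
             (∀ e, G.SameVertex d e → ρ e = G.rot⁻¹ e)

/-- `ρ` is a rotation system describing a *-embedding of `G` into the sphere
(equivalently, the plane): it is compatible with the *-structure and has Euler
characteristic `2` on each connected component. -/
def IsPlanarStarEmbedding (ρ : Equiv.Perm G.D) : Prop :=
  G.IsCompatibleRotation ρ ∧
    (G.numVertices : ℤ) - G.numEdges + G.numFaces ρ = 2 * G.numComponents

/-- `G` admits a *-embedding into the plane. -/
def StarPlanar : Prop := ∃ ρ : Equiv.Perm G.D, G.IsPlanarStarEmbedding ρ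

end StarGraph

/-- A cycle in the sense of Vassiliev's planarity criterion: a closed walk,
recorded by the cyclically ordered sequence of darts it traverses, that repeats
no edge (repeated vertices are allowed). -/
structure ClosedTrail (G : StarGraph) where
  /-- the number of edges of the cycle -/
  len : ℕ
  len_pos : 0 < len
  /-- the dart along which the walk leaves its `i`-th vertex -/
  dart : ZMod len → G.D
  /-- the walk is closed: the head of each traversed edge is the tail of the next -/
  next_sameVertex : ∀ i, G.SameVertex (G.edgeInv (dart i)) (dart (i + 1))
  /-- no edge is repeated -/
  edges_injective : ∀ i j, (dart i = dart j ∨ dart i = G.edgeInv (dart j)) → i = j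

/-- Two closed trails have no common edge. -/
def ClosedTrail.EdgeDisjoint {G : StarGraph} (A B : ClosedTrail G) : Prop :=
  ∀ i j, A.dart i ≠ B.dart j ∧ A.dart i ≠ G.edgeInv (B.dart j)

/-- The least positive number of steps needed to get from `x` to `y` along the
permutation `σ` (junk value `0` if `y` is not on the cycle of `x`). -/
noncomputable def stepsTo {α : Type*} (σ : Equiv.Perm α) (x y : α) : ℕ :=
  sInf {m : ℕ | 0 < m ∧ (σ ^ m) x = y}

/-- The four darts `a₁, a₂, b₁, b₂`, lying on one cycle of `σ`, appear in this
cycle in alternating order: starting at `a₁`, one of `b₁, b₂` is met strictly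
before `a₂` and the other strictly after.  This is invariant under replacing
`σ` by `σ⁻¹`, i.e. it only depends on the unoriented cyclic order. -/
def Alternating {α : Type*} (σ : Equiv.Perm α) (a₁ a₂ b₁ b₂ : α) : Prop :=
  (stepsTo σ a₁ b₁ < stepsTo σ a₁ a₂ ∧ stepsTo σ a₁ a₂ < stepsTo σ a₁ b₂) ∨
  (stepsTo σ a₁ b₂ < stepsTo σ a₁ a₂ ∧ stepsTo σ a₁ a₂ < stepsTo σ a₁ b₁)

/-- The pair of passes `(i, j)` is a crossing of the closed trails `A` and `B`:
at its `i`-th step `A` passes through a vertex `v` along the half-edges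
`A₁ = edgeInv (A.dart (i-1))` (incoming) and `A₂ = A.dart i` (outgoing), `B`
passes through the same vertex `v` at its `j`-th step along `B₁, B₂`, and
`A₁, B₁, A₂, B₂` alternate in the cyclic order at `v`.  Counting crossings
means counting such pairs `(i, j)`, i.e. crossings are counted with
multiplicity. -/
def ClosedTrail.IsCrossing {G : StarGraph} (A B : ClosedTrail G)
    (p : ZMod A.len × ZMod B.len) : Prop :=
  G.SameVertex (A.dart p.1) (B.dart p.2) ∧
  Alternating G.rot (G.edgeInv (A.dart (p.1 - 1))) (A.dart p.1)
    (G.edgeInv (B.dart (p.2 - 1))) (B.dart p.2)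

/-- A Vassiliev obstruct: a pair of edge-disjoint cycles having exactly one
crossing (with multiplicity). -/
def HasVassilievObstruct (G : StarGraph) : Prop :=
  ∃ A B : ClosedTrail G, A.EdgeDisjoint B ∧
    Nat.card {p : ZMod A.len × ZMod B.len // A.IsCrossing B p} = 1

set_option synthInstance.maxHeartbeats 400000
set_option maxHeartbeats 1000000
set_option linter.unusedSectionVars false

/-! ### API for `stepsTo` -/

section StepsTo

open Equiv

variable {α : Type*} [Fintype α] (σ : Equiv.Perm α)

/-- The length of the cycle of `σ` through `x`. -/
noncomputable def per (x : α) : ℕ := stepsTo σ x x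

variable {σ}

lemma pow_add_apply (σ : Equiv.Perm α) (m n : ℕ) (x : α) :
    (σ ^ (m + n)) x = (σ ^ m) ((σ ^ n) x) := by
  rw [pow_add, Equiv.Perm.mul_apply]

lemma per_set_nonempty (x : α) : {m : ℕ | 0 < m ∧ (σ ^ m) x = x}.Nonempty :=
  ⟨orderOf σ, orderOf_pos σ, by rw [pow_orderOf_eq_one]; rfl⟩

lemma per_pos (x : α) : 0 < per σ x := (Nat.sInf_mem (per_set_nonempty x)).1

lemma pow_per (x : α) : (σ ^ per σ x) x = x := (Nat.sInf_mem (per_set_nonempty x)).2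

lemma per_min {x : α} {m : ℕ} (h0 : 0 < m) (h : (σ ^ m) x = x) : per σ x ≤ m :=
  Nat.sInf_le ⟨h0, h⟩

lemma stepsTo_pos {x y : α} (h : σ.SameCycle x y) : 0 < stepsTo σ x y := by
  obtain ⟨i, hi0, _, hi⟩ := h.exists_pow_eq''
  exact (Nat.sInf_mem (⟨i, hi0, hi⟩ : {m : ℕ | 0 < m ∧ (σ ^ m) x = y}.Nonempty)).1

lemma pow_stepsTo {x y : α} (h : σ.SameCycle x y) : (σ ^ stepsTo σ x y) x = y := by
  obtain ⟨i, hi0, _, hi⟩ := h.exists_pow_eq''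
  exact (Nat.sInf_mem (⟨i, hi0, hi⟩ : {m : ℕ | 0 < m ∧ (σ ^ m) x = y}.Nonempty)).2

lemma stepsTo_min {x y : α} {m : ℕ} (h0 : 0 < m) (h : (σ ^ m) x = y) : stepsTo σ x y ≤ m :=
  Nat.sInf_le ⟨h0, h⟩

@[simp] lemma stepsTo_self (x : α) : stepsTo σ x x = per σ x := rfl

lemma stepsTo_le_per {x y : α} (h : σ.SameCycle x y) : stepsTo σ x y ≤ per σ x := by
  by_contra hgt
  push_neg at hgt
  set s := stepsTo σ x y with hs
  have hpp := per_pos (σ := σ) x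
  have h1 : (σ ^ (s - per σ x)) x = y := by
    have h2 : (σ ^ (s - per σ x + per σ x)) x = y := by
      rw [Nat.sub_add_cancel hgt.le]; exact pow_stepsTo h
    rwa [pow_add_apply, pow_per] at h2
  have := stepsTo_min (by omega) h1
  omega

lemma stepsTo_unique {x y : α} {m : ℕ} (h1 : 0 < m) (h2 : m ≤ per σ x)
    (h : (σ ^ m) x = y) : stepsTo σ x y = m := by
  have hle := stepsTo_min h1 h
  rcases hle.lt_or_eq with hlt | he
  · exfalso
    have hsc : σ.SameCycle x y := ⟨m, by rw [zpow_natCast]; exact h⟩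
    have hspos := stepsTo_pos hsc
    have hp := pow_stepsTo hsc
    set s := stepsTo σ x y with hs
    have hmx : (σ ^ (m - s)) x = x := by
      have hinj : Function.Injective (σ ^ s : Equiv.Perm α) := Equiv.injective _
      apply hinj
      rw [← pow_add_apply, Nat.add_sub_cancel' hlt.le, h, hp]
    have := per_min (by omega) hmx
    omega
  · exact he

lemma stepsTo_lt_per {x y : α} (h : σ.SameCycle x y) (hne : y ≠ x) :
    stepsTo σ x y < per σ x := by
  rcases (stepsTo_le_per h).lt_or_eq with h' | h'
  · exact h'
  · exact absurd (by rw [← pow_stepsTo h, h', pow_per]) (Ne.symm hne)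

lemma stepsTo_inj {x y z : α} (hy : σ.SameCycle x y) (hz : σ.SameCycle x z)
    (he : stepsTo σ x y = stepsTo σ x z) : y = z := by
  rw [← pow_stepsTo hy, ← pow_stepsTo hz, he]

lemma per_congr {x y : α} (h : σ.SameCycle x y) : per σ y = per σ x := by
  have key : ∀ u v : α, σ.SameCycle u v → per σ v ≤ per σ u := by
    intro u v huv
    have hp : (σ ^ per σ u) v = v := by
      obtain ⟨i, _, _, hi⟩ := huv.exists_pow_eq''
      rw [← hi, ← pow_add_apply, Nat.add_comm, pow_add_apply, pow_per]
    exact per_min (per_pos u) hp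
  exact le_antisymm (key x y h) (key y x h.symm)

lemma stepsTo_base {b a z : α} (ha : σ.SameCycle b a) (hz : σ.SameCycle b z) :
    stepsTo σ a z = if stepsTo σ b a < stepsTo σ b z then stepsTo σ b z - stepsTo σ b a
      else stepsTo σ b z + per σ b - stepsTo σ b a := by
  have hpa := stepsTo_pos ha
  have hpz := stepsTo_pos hz
  have hla := stepsTo_le_per ha
  have hlz := stepsTo_le_per hz
  have hper : per σ a = per σ b := per_congr ha
  have hza : (σ ^ stepsTo σ b a) b = a := pow_stepsTo ha
  have hzz : (σ ^ stepsTo σ b z) b = z := pow_stepsTo hz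
  split_ifs with hlt
  · refine stepsTo_unique (by omega) (by omega) ?_
    calc (σ ^ (stepsTo σ b z - stepsTo σ b a)) a
        = (σ ^ (stepsTo σ b z - stepsTo σ b a)) ((σ ^ stepsTo σ b a) b) := by rw [hza]
      _ = (σ ^ (stepsTo σ b z - stepsTo σ b a + stepsTo σ b a)) b := (pow_add_apply ..).symm
      _ = z := by rw [Nat.sub_add_cancel hlt.le, hzz]
  · push_neg at hlt
    refine stepsTo_unique (by omega) (by omega) ?_
    calc (σ ^ (stepsTo σ b z + per σ b - stepsTo σ b a)) a
        = (σ ^ (stepsTo σ b z + per σ b - stepsTo σ b a)) ((σ ^ stepsTo σ b a) b) := by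
          rw [hza]
      _ = (σ ^ (stepsTo σ b z + per σ b - stepsTo σ b a + stepsTo σ b a)) b :=
          (pow_add_apply ..).symm
      _ = z := by
          have he : stepsTo σ b z + per σ b - stepsTo σ b a + stepsTo σ b a
              = stepsTo σ b z + per σ b := by omega
          rw [he, pow_add_apply, pow_per, hzz]

lemma per_inv (x : α) : per σ⁻¹ x = per σ x := by
  unfold per stepsTo
  congr 1
  ext m
  simp only [Set.mem_setOf_eq, and_congr_right_iff]
  intro _
  rw [inv_pow]
  constructor
  · intro h; conv_lhs => rw [← h]
    simp
  · intro h; conv_lhs => rw [← h]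
    simp

lemma stepsTo_inv {x y : α} (h : σ.SameCycle x y) (hne : y ≠ x) :
    stepsTo σ⁻¹ x y = per σ x - stepsTo σ x y := by
  have h1 := stepsTo_pos h
  have h2 := stepsTo_lt_per h hne
  set s := stepsTo σ x y with hs
  have hs3 : (σ ^ s) x = y := pow_stepsTo h
  have h2' : (σ ^ (per σ x - s)) y = x := by
    rw [← hs3, ← pow_add_apply, (by omega : per σ x - s + s = per σ x), pow_per]
  have hkey : (σ⁻¹ ^ (per σ x - s)) x = y := by
    rw [inv_pow]
    apply (Equiv.injective (σ ^ (per σ x - s)))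
    rw [← Equiv.Perm.mul_apply, mul_inv_cancel, Equiv.Perm.one_apply]
    exact h2'.symm
  refine stepsTo_unique (by omega) ?_ hkey
  rw [per_inv]; omega

end StepsTo
/-! ### API for `Alternating` -/

section AlternatingAPI

variable {α : Type*} [Fintype α] {σ : Equiv.Perm α} {a₁ a₂ b₁ b₂ : α}

lemma alternating_inv (h2 : σ.SameCycle a₁ a₂) (hb1 : σ.SameCycle a₁ b₁)
    (hb2 : σ.SameCycle a₁ b₂) (n2 : a₂ ≠ a₁) (n3 : b₁ ≠ a₁) (n4 : b₂ ≠ a₁) :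
    Alternating σ⁻¹ a₁ a₂ b₁ b₂ ↔ Alternating σ a₁ a₂ b₁ b₂ := by
  have e2 := stepsTo_inv h2 n2
  have e3 := stepsTo_inv hb1 n3
  have e4 := stepsTo_inv hb2 n4
  have l2 := stepsTo_lt_per h2 n2
  have l3 := stepsTo_lt_per hb1 n3
  have l4 := stepsTo_lt_per hb2 n4
  have p2 := stepsTo_pos h2
  have p3 := stepsTo_pos hb1
  have p4 := stepsTo_pos hb2
  unfold Alternating
  rw [e2, e3, e4]
  omega

lemma alternating_iff_not_iff (h2 : σ.SameCycle a₁ a₂) (hb1 : σ.SameCycle a₁ b₁)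
    (hb2 : σ.SameCycle a₁ b₂) (d1 : b₁ ≠ a₂) (d2 : b₂ ≠ a₂) (d3 : b₁ ≠ b₂) :
    Alternating σ a₁ a₂ b₁ b₂ ↔
      ¬ ((stepsTo σ a₁ b₁ < stepsTo σ a₁ a₂) ↔ (stepsTo σ a₁ b₂ < stepsTo σ a₁ a₂)) := by
  have h1 : stepsTo σ a₁ b₁ ≠ stepsTo σ a₁ a₂ := fun h => d1 (stepsTo_inj hb1 h2 h)
  have h2' : stepsTo σ a₁ b₂ ≠ stepsTo σ a₁ a₂ := fun h => d2 (stepsTo_inj hb2 h2 h)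
  have h3 : stepsTo σ a₁ b₁ ≠ stepsTo σ a₁ b₂ := fun h => d3 (stepsTo_inj hb1 hb2 h)
  unfold Alternating
  omega

lemma alternating_symm (hA1 : σ.SameCycle b₁ a₁) (hA2 : σ.SameCycle b₁ a₂)
    (hB2 : σ.SameCycle b₁ b₂)
    (na1 : a₁ ≠ b₁) (na2 : a₂ ≠ b₁) (nb2 : b₂ ≠ b₁)
    (d1 : a₂ ≠ a₁) (d2 : b₂ ≠ a₂) (d3 : b₂ ≠ a₁) :
    Alternating σ a₁ a₂ b₁ b₂ ↔
      ¬ ((stepsTo σ b₁ a₁ < stepsTo σ b₁ b₂) ↔ (stepsTo σ b₁ a₂ < stepsTo σ b₁ b₂)) := by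
  have hA12 : σ.SameCycle a₁ a₂ := hA1.symm.trans hA2
  have hA1B1 : σ.SameCycle a₁ b₁ := hA1.symm
  have hA1B2 : σ.SameCycle a₁ b₂ := hA1.symm.trans hB2
  rw [alternating_iff_not_iff hA12 hA1B1 hA1B2 na2.symm d2 nb2.symm]
  have e1 : stepsTo σ a₁ b₁ = if stepsTo σ b₁ a₁ < per σ b₁ then per σ b₁ - stepsTo σ b₁ a₁
      else per σ b₁ + per σ b₁ - stepsTo σ b₁ a₁ := by
    have := stepsTo_base hA1 (Equiv.Perm.SameCycle.refl σ b₁)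
    rw [stepsTo_self] at this; exact this
  have e2 : stepsTo σ a₁ a₂ = if stepsTo σ b₁ a₁ < stepsTo σ b₁ a₂
      then stepsTo σ b₁ a₂ - stepsTo σ b₁ a₁
      else stepsTo σ b₁ a₂ + per σ b₁ - stepsTo σ b₁ a₁ := stepsTo_base hA1 hA2
  have e3 : stepsTo σ a₁ b₂ = if stepsTo σ b₁ a₁ < stepsTo σ b₁ b₂
      then stepsTo σ b₁ b₂ - stepsTo σ b₁ a₁
      else stepsTo σ b₁ b₂ + per σ b₁ - stepsTo σ b₁ a₁ := stepsTo_base hA1 hB2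
  have l1 := stepsTo_lt_per hA1 na1
  have l2 := stepsTo_lt_per hA2 na2
  have l3 := stepsTo_lt_per hB2 nb2
  have p1 := stepsTo_pos hA1
  have p2 := stepsTo_pos hA2
  have p3 := stepsTo_pos hB2
  have q1 : stepsTo σ b₁ a₁ ≠ stepsTo σ b₁ a₂ := fun h => d1 ((stepsTo_inj hA1 hA2 h).symm ▸ rfl)
  have q2 : stepsTo σ b₁ a₂ ≠ stepsTo σ b₁ b₂ := fun h => d2 ((stepsTo_inj hA2 hB2 h).symm ▸ rfl)
  have q3 : stepsTo σ b₁ a₁ ≠ stepsTo σ b₁ b₂ := fun h => d3 ((stepsTo_inj hA1 hB2 h).symm ▸ rfl)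
  rw [e1, e2, e3]
  split_ifs <;> omega

end AlternatingAPI
/-! ### Compatible rotations -/

section Compat

lemma stepsTo_congr {α : Type*} {σ τ : Equiv.Perm α} {d x : α}
    (h : ∀ m : ℕ, (σ ^ m) d = (τ ^ m) d) : stepsTo σ d x = stepsTo τ d x := by
  unfold stepsTo
  congr 1
  ext m
  simp [h m]

namespace StarGraph

variable {G : StarGraph} {ρ : Equiv.Perm G.D}

lemma sameVertex_refl (d : G.D) : G.SameVertex d d := Equiv.Perm.SameCycle.refl _ _

lemma sameVertex_symm {d e : G.D} (h : G.SameVertex d e) : G.SameVertex e d := h.symm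

lemma sameVertex_trans {d e f : G.D} (h : G.SameVertex d e) (h' : G.SameVertex e f) :
    G.SameVertex d f := h.trans h'

lemma sameVertex_rot (d : G.D) : G.SameVertex d (G.rot d) := ⟨1, by simp⟩

lemma sameVertex_rot_inv (d : G.D) : G.SameVertex d (G.rot⁻¹ d) := ⟨-1, by simp⟩

lemma pow_eq_rot {d : G.D} (h : ∀ e, G.SameVertex d e → ρ e = G.rot e) :
    ∀ (m : ℕ) (x : G.D), G.SameVertex d x → (ρ ^ m) x = (G.rot ^ m) x := by
  intro m
  induction m with
  | zero => simp
  | succ m ih =>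
    intro x hx
    rw [pow_succ, pow_succ, Equiv.Perm.mul_apply, Equiv.Perm.mul_apply, h x hx]
    exact ih _ (G.sameVertex_trans hx (G.sameVertex_rot x))

lemma pow_eq_rot_inv {d : G.D} (h : ∀ e, G.SameVertex d e → ρ e = G.rot⁻¹ e) :
    ∀ (m : ℕ) (x : G.D), G.SameVertex d x → (ρ ^ m) x = (G.rot⁻¹ ^ m) x := by
  intro m
  induction m with
  | zero => simp
  | succ m ih =>
    intro x hx
    rw [pow_succ, pow_succ, Equiv.Perm.mul_apply, Equiv.Perm.mul_apply, h x hx]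
    exact ih _ (G.sameVertex_trans hx (G.sameVertex_rot_inv x))

lemma sameCycle_rho_iff (hc : G.IsCompatibleRotation ρ) {d x : G.D} :
    ρ.SameCycle d x ↔ G.SameVertex d x := by
  rcases hc d with h | h
  · constructor
    · intro hsc
      obtain ⟨m, _, _, hm⟩ := hsc.exists_pow_eq''
      rw [pow_eq_rot h m d (G.sameVertex_refl d)] at hm
      exact ⟨m, by rw [zpow_natCast]; exact hm⟩
    · intro hsv
      obtain ⟨m, _, _, hm⟩ := hsv.exists_pow_eq''
      rw [← pow_eq_rot h m d (G.sameVertex_refl d)] at hm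
      exact ⟨m, by rw [zpow_natCast]; exact hm⟩
  · constructor
    · intro hsc
      obtain ⟨m, _, _, hm⟩ := hsc.exists_pow_eq''
      rw [pow_eq_rot_inv h m d (G.sameVertex_refl d)] at hm
      have : G.rot⁻¹.SameCycle d x := ⟨m, by rw [zpow_natCast]; exact hm⟩
      exact Equiv.Perm.sameCycle_inv.mp this
    · intro hsv
      have hsv' : G.rot⁻¹.SameCycle d x := Equiv.Perm.sameCycle_inv.mpr hsv
      obtain ⟨m, _, _, hm⟩ := hsv'.exists_pow_eq''
      rw [← pow_eq_rot_inv h m d (G.sameVertex_refl d)] at hm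
      exact ⟨m, by rw [zpow_natCast]; exact hm⟩

lemma stepsTo_rho_of_rot {d x : G.D} (h : ∀ e, G.SameVertex d e → ρ e = G.rot e) :
    stepsTo ρ d x = stepsTo G.rot d x :=
  stepsTo_congr fun m => pow_eq_rot h m d (G.sameVertex_refl d)

lemma stepsTo_rho_of_rot_inv {d x : G.D} (h : ∀ e, G.SameVertex d e → ρ e = G.rot⁻¹ e) :
    stepsTo ρ d x = stepsTo G.rot⁻¹ d x :=
  stepsTo_congr fun m => pow_eq_rot_inv h m d (G.sameVertex_refl d)

lemma alternating_rho_iff (hc : G.IsCompatibleRotation ρ) {a₁ a₂ b₁ b₂ : G.D}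
    (h2 : G.SameVertex a₁ a₂) (h3 : G.SameVertex a₁ b₁) (h4 : G.SameVertex a₁ b₂)
    (n2 : a₂ ≠ a₁) (n3 : b₁ ≠ a₁) (n4 : b₂ ≠ a₁) :
    Alternating ρ a₁ a₂ b₁ b₂ ↔ Alternating G.rot a₁ a₂ b₁ b₂ := by
  rcases hc a₁ with h | h
  · unfold Alternating
    rw [stepsTo_rho_of_rot h, stepsTo_rho_of_rot h, stepsTo_rho_of_rot h]
  · unfold Alternating
    rw [stepsTo_rho_of_rot_inv h, stepsTo_rho_of_rot_inv h, stepsTo_rho_of_rot_inv h]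
    have := alternating_inv (σ := G.rot) h2 h3 h4 n2 n3 n4
    unfold Alternating at this
    exact this

end StarGraph

end Compat
/-! ### Linear algebra over `F2` -/

section LinAlg

open Finset

abbrev F2 := ZMod 2

lemma F2.add_self (a : F2) : a + a = 0 := by
  have : (2 : F2) = 0 := by decide
  calc a + a = 2 * a := by ring
  _ = 0 := by rw [this, zero_mul]

variable {α : Type*} [Fintype α] [DecidableEq α]

/-- The submodule of functions invariant under a permutation. -/
def fixSubmodule (σ : Equiv.Perm α) : Submodule F2 (α → F2) where
  carrier := {f | ∀ d, f (σ d) = f d}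
  add_mem' := fun ha hb d => by simp [ha d, hb d]
  zero_mem' := fun d => rfl
  smul_mem' := fun c f hf d => by simp [hf d]

lemma mem_fixSubmodule {σ : Equiv.Perm α} {f : α → F2} :
    f ∈ fixSubmodule σ ↔ ∀ d, f (σ d) = f d := Iff.rfl

lemma fixSubmodule_pow {σ : Equiv.Perm α} {f : α → F2} (hf : f ∈ fixSubmodule σ)
    (m : ℕ) (x : α) : f ((σ ^ m) x) = f x := by
  induction m with
  | zero => simp
  | succ m ih => rw [pow_succ', Equiv.Perm.mul_apply, hf, ih]

lemma fixSubmodule_sameCycle {σ : Equiv.Perm α} {f : α → F2} (hf : f ∈ fixSubmodule σ)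
    {x y : α} (h : σ.SameCycle x y) : f x = f y := by
  obtain ⟨m, _, _, hm⟩ := h.exists_pow_eq''
  rw [← hm, fixSubmodule_pow hf]

/-- A submodule whose membership is constancy on the classes of a setoid
is isomorphic to functions on the quotient. -/
noncomputable def setoidEquiv (s : Setoid α) (P : Submodule F2 (α → F2))
    (hP : ∀ f, f ∈ P ↔ ∀ x y : α, s.r x y → f x = f y) :
    (Quotient s → F2) ≃ₗ[F2] P where
  toFun g := ⟨fun x => g (Quotient.mk s x), (hP _).mpr fun x y hxy => by
    simp [Quotient.sound hxy]⟩
  map_add' _ _ := rfl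
  map_smul' _ _ := rfl
  invFun f q := Quotient.liftOn q (f : α → F2) (fun x y hxy => (hP _).mp f.2 x y hxy)
  left_inv g := by
    funext q
    induction q using Quotient.ind
    rfl
  right_inv f := by
    ext x
    rfl

lemma finrank_of_setoid (s : Setoid α) (P : Submodule F2 (α → F2))
    (hP : ∀ f, f ∈ P ↔ ∀ x y : α, s.r x y → f x = f y) :
    Module.finrank F2 P = Nat.card (Quotient s) := by
  classical
  rw [← (setoidEquiv s P hP).finrank_eq, Module.finrank_pi, Nat.card_eq_fintype_card]

lemma finrank_fixSubmodule (σ : Equiv.Perm α) :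
    Module.finrank F2 (fixSubmodule σ) = StarGraph.cycleCount σ := by
  apply finrank_of_setoid
  intro f
  constructor
  · intro hf x y h
    exact fixSubmodule_sameCycle hf h
  · intro hf d
    exact (hf d (σ d) ⟨1, by simp⟩).symm

end LinAlg
section LinAlg2

open Finset

namespace StarGraph

variable (G : StarGraph)

/-- The relation generating connected components. -/
abbrev compRel : G.D → G.D → Prop := fun d e => e = G.rot d ∨ e = G.edgeInv d

lemma comp_rot (d : G.D) : Relation.EqvGen G.compRel d (G.rot d) :=
  Relation.EqvGen.rel _ _ (Or.inl rfl)

lemma comp_edgeInv (d : G.D) : Relation.EqvGen G.compRel d (G.edgeInv d) :=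
  Relation.EqvGen.rel _ _ (Or.inr rfl)

lemma comp_pow (m : ℕ) (d : G.D) : Relation.EqvGen G.compRel d ((G.rot ^ m) d) := by
  induction m with
  | zero => exact Relation.EqvGen.refl d
  | succ m ih =>
    rw [pow_succ', Equiv.Perm.mul_apply]
    exact Relation.EqvGen.trans _ _ _ ih (G.comp_rot _)

lemma comp_of_sameVertex {d x : G.D} (h : G.SameVertex d x) :
    Relation.EqvGen G.compRel d x := by
  obtain ⟨m, _, _, hm⟩ := h.exists_pow_eq''
  rw [← hm]
  exact G.comp_pow m d

lemma mem_fix_inf_iff {f : G.D → F2} :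
    f ∈ fixSubmodule G.rot ⊓ fixSubmodule G.edgeInv ↔
      ∀ x y : G.D, Relation.EqvGen G.compRel x y → f x = f y := by
  constructor
  · rintro ⟨h1, h2⟩ x y h
    induction h with
    | rel a b hab =>
      rcases hab with rfl | rfl
      · exact (h1 a).symm
      · exact (h2 a).symm
    | refl a => rfl
    | symm a b _ ih => exact ih.symm
    | trans a b c _ _ ih1 ih2 => exact ih1.trans ih2
  · intro h
    constructor
    · intro d
      exact (h d (G.rot d) (G.comp_rot d)).symm
    · intro d
      exact (h d (G.edgeInv d) (G.comp_edgeInv d)).symm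

lemma finrank_comp :
    Module.finrank F2 ((fixSubmodule G.rot ⊓ fixSubmodule G.edgeInv : Submodule F2 (G.D → F2)))
      = G.numComponents := by
  apply finrank_of_setoid
  intro f
  exact G.mem_fix_inf_iff

lemma sameCycle_edgeInv_iff {x y : G.D} :
    G.edgeInv.SameCycle x y ↔ y = x ∨ y = G.edgeInv x := by
  constructor
  · rintro ⟨i, rfl⟩
    have h2 : G.edgeInv ^ (2 : ℤ) = 1 := by
      ext d
      simp [zpow_two, Equiv.Perm.mul_apply, G.edgeInv_invol d]
      rw [sq, Equiv.Perm.mul_apply, G.edgeInv_invol d]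
    have hi : G.edgeInv ^ i = G.edgeInv ^ (i % 2) := by
      conv_lhs => rw [← Int.emod_add_mul_ediv i 2]
      rw [zpow_add, zpow_mul, h2, one_zpow, mul_one]
    rcases Int.emod_two_eq i with h | h
    · left; rw [hi, h]; simp
    · right; rw [hi, h]; simp
  · rintro (rfl | rfl)
    · exact Equiv.Perm.SameCycle.refl _ _
    · exact ⟨1, by simp⟩

lemma two_mul_cycleCount_edgeInv :
    2 * cycleCount G.edgeInv = Fintype.card G.D := by
  classical
  unfold cycleCount
  rw [Nat.card_eq_fintype_card]
  have key : (Finset.univ : Finset G.D).card =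
      ∑ q : Quotient (Equiv.Perm.SameCycle.setoid G.edgeInv),
        (Finset.univ.filter (fun d => Quotient.mk _ d = q)).card := by
    exact Finset.card_eq_sum_card_fiberwise (fun x _ => Finset.mem_univ _)
  have fib : ∀ q : Quotient (Equiv.Perm.SameCycle.setoid G.edgeInv),
      (Finset.univ.filter (fun d => Quotient.mk _ d = q)).card = 2 := by
    intro q
    induction q using Quotient.ind with
    | _ d₀ =>
      have : Finset.univ.filter
          (fun d => Quotient.mk (Equiv.Perm.SameCycle.setoid G.edgeInv) d
            = Quotient.mk _ d₀) = {d₀, G.edgeInv d₀} := by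
        ext x
        simp only [Finset.mem_filter, Finset.mem_univ, true_and, Finset.mem_insert,
          Finset.mem_singleton, Quotient.eq]
        change G.edgeInv.SameCycle x d₀ ↔ _
        rw [G.sameCycle_edgeInv_iff]
        constructor
        · rintro (rfl | h)
          · exact Or.inl rfl
          · right
            rw [h, G.edgeInv_invol]
        · rintro (rfl | rfl)
          · exact Or.inl rfl
          · right
            rw [G.edgeInv_invol]
      rw [this, Finset.card_insert_of_notMem (by simp [Ne.symm (G.edgeInv_ne d₀)]),
        Finset.card_singleton]
  have key' : Fintype.card G.D =
      ∑ q : Quotient (Equiv.Perm.SameCycle.setoid G.edgeInv),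
        (Finset.univ.filter (fun d => Quotient.mk _ d = q)).card := key
  simp only [fib, Finset.sum_const, smul_eq_mul] at key'
  rw [key', Finset.card_univ]
  ring

lemma finrank_fix_edgeInv :
    Module.finrank F2 (fixSubmodule G.edgeInv : Submodule F2 (G.D → F2)) = G.numEdges := by
  rw [finrank_fixSubmodule]
  unfold numEdges
  have := G.two_mul_cycleCount_edgeInv
  omega

end StarGraph

end LinAlg2
section LinAlg3

open Finset
open scoped Classical

variable {α : Type*} [Fintype α] [DecidableEq α]

/-- Sum over the `r`-class linear map. -/
noncomputable def relSum (r : α → α → Prop) : (α → F2) →ₗ[F2] (α → F2) where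
  toFun c := fun d => ∑ x ∈ Finset.univ.filter (r d), c x
  map_add' a b := by
    funext d
    exact Finset.sum_add_distrib
  map_smul' m a := by
    funext d
    simp [Finset.mul_sum]

lemma relSum_apply (r : α → α → Prop) (c : α → F2) (d : α) :
    relSum r c d = ∑ x ∈ Finset.univ.filter (r d), c x := rfl

/-- `g ↦ g + g ∘ σ`. -/
noncomputable def addComp (σ : Equiv.Perm α) : (α → F2) →ₗ[F2] (α → F2) :=
  LinearMap.id + LinearMap.funLeft F2 F2 σ

lemma addComp_apply (σ : Equiv.Perm α) (g : α → F2) (d : α) :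
    addComp σ g d = g d + g (σ d) := rfl

/-- Sum over representatives of `s`-classes lying in the `t`-class of the argument. -/
noncomputable def repSum (s : Setoid α) (t : α → α → Prop) : (α → F2) →ₗ[F2] (α → F2) where
  toFun c := fun d => ∑ q ∈ Finset.univ.filter (fun q : Quotient s => t d q.out), c q.out
  map_add' a b := by
    funext d
    exact Finset.sum_add_distrib
  map_smul' m a := by
    funext d
    simp [Finset.mul_sum]

lemma repSum_apply (s : Setoid α) (t : α → α → Prop) (c : α → F2) (d : α) :
    repSum s t c d = ∑ q ∈ Finset.univ.filter (fun q : Quotient s => t d q.out), c q.out := rfl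

lemma finrank_inf_ker (P : Submodule F2 (α → F2)) (L : (α → F2) →ₗ[F2] (α → F2)) :
    Module.finrank F2 P
      = Module.finrank F2 (LinearMap.range (L ∘ₗ P.subtype))
        + Module.finrank F2 (P ⊓ LinearMap.ker L : Submodule F2 (α → F2)) := by
  rw [← LinearMap.finrank_range_add_finrank_ker (L ∘ₗ P.subtype)]
  congr 1
  have h : LinearMap.ker (L ∘ₗ P.subtype)
      = Submodule.comap P.subtype (P ⊓ LinearMap.ker L) := by
    ext x
    simp [LinearMap.mem_ker]
  rw [h]
  exact (Submodule.comapSubtypeEquivOfLe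
    (inf_le_left : P ⊓ LinearMap.ker L ≤ P)).finrank_eq

end LinAlg3
section LinAlg4

open Finset
open scoped Classical

namespace StarGraph

variable (G : StarGraph)

/-- vertex-sum linear map -/
noncomputable def vSum : (G.D → F2) →ₗ[F2] (G.D → F2) := relSum G.rot.SameCycle

/-- component-sum (over vertex representatives) linear map -/
noncomputable def cSum : (G.D → F2) →ₗ[F2] (G.D → F2) :=
  repSum (Equiv.Perm.SameCycle.setoid G.rot) (Relation.EqvGen G.compRel)

/-- indicator of the vertex of `d` -/
noncomputable def chiV (d : G.D) : G.D → F2 := fun x => if G.SameVertex d x then 1 else 0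

abbrev vQuot := Quotient (Equiv.Perm.SameCycle.setoid G.rot)

lemma out_sameVertex (d : G.D) :
    G.SameVertex (Quotient.mk (Equiv.Perm.SameCycle.setoid G.rot) d).out d :=
  Quotient.exact (Quotient.out_eq (Quotient.mk (Equiv.Perm.SameCycle.setoid G.rot) d))

lemma filter_vertex_congr {d d' : G.D} (h : G.SameVertex d d') :
    Finset.univ.filter (G.rot.SameCycle d) = Finset.univ.filter (G.rot.SameCycle d') := by
  ext x
  simp only [Finset.mem_filter, Finset.mem_univ, true_and]
  exact ⟨fun hx => h.symm.trans hx, fun hx => h.trans hx⟩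

lemma vSum_apply (c : G.D → F2) (d : G.D) :
    G.vSum c d = ∑ x ∈ Finset.univ.filter (G.rot.SameCycle d), c x := by
  unfold vSum
  refine (relSum_apply G.rot.SameCycle c d).trans ?_
  congr!

lemma cSum_apply (c : G.D → F2) (d : G.D) :
    G.cSum c d = ∑ q ∈ Finset.univ.filter
      (fun q : G.vQuot => Relation.EqvGen G.compRel d q.out), c q.out := by
  unfold cSum
  refine (repSum_apply (Equiv.Perm.SameCycle.setoid G.rot) (Relation.EqvGen G.compRel) c d).trans ?_
  congr!

lemma vSum_congr (c : G.D → F2) {d d' : G.D} (h : G.SameVertex d d') :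
    G.vSum c d = G.vSum c d' := by
  rw [vSum_apply, vSum_apply, G.filter_vertex_congr h]

lemma cSum_congr (c : G.D → F2) {d d' : G.D} (h : Relation.EqvGen G.compRel d d') :
    G.cSum c d = G.cSum c d' := by
  rw [cSum_apply, cSum_apply]
  congr 1
  ext q
  simp only [Finset.mem_filter, Finset.mem_univ, true_and]
  exact ⟨fun hq => Relation.EqvGen.trans _ _ _ (Relation.EqvGen.symm _ _ h) hq,
    fun hq => Relation.EqvGen.trans _ _ _ h hq⟩

lemma vSum_mem_fixrot (c : G.D → F2) : G.vSum c ∈ fixSubmodule G.rot := by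
  intro d
  exact G.vSum_congr c (G.sameVertex_rot d).symm

lemma cSum_mem_fix_inf (c : G.D → F2) :
    G.cSum c ∈ fixSubmodule G.rot ⊓ fixSubmodule G.edgeInv := by
  constructor
  · intro d
    exact G.cSum_congr c (Relation.EqvGen.symm _ _ (G.comp_rot d))
  · intro d
    exact G.cSum_congr c (Relation.EqvGen.symm _ _ (G.comp_edgeInv d))

lemma chiV_mem_fixrot (d : G.D) : G.chiV d ∈ fixSubmodule G.rot := by
  intro x
  unfold chiV
  congr 1
  simp only [eq_iff_iff]
  constructor
  · intro h
    exact (Equiv.Perm.sameCycle_apply_right).mp h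
  · intro h
    exact (Equiv.Perm.sameCycle_apply_right).mpr h

lemma chiV_congr {d d' : G.D} (h : G.SameVertex d d') : G.chiV d = G.chiV d' := by
  funext x
  unfold chiV
  congr 1
  simp only [eq_iff_iff]
  exact ⟨fun hx => h.symm.trans hx, fun hx => h.trans hx⟩

lemma cSum_chiV (d x : G.D) :
    G.cSum (G.chiV d) x = if Relation.EqvGen G.compRel x d then 1 else 0 := by
  rw [cSum_apply]
  by_cases hc : Relation.EqvGen G.compRel x d
  · rw [if_pos hc]
    rw [Finset.sum_eq_single (Quotient.mk (Equiv.Perm.SameCycle.setoid G.rot) d)]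
    · unfold chiV
      rw [if_pos (G.sameVertex_symm (G.out_sameVertex d))]
    · intro q hq hne
      unfold chiV
      rw [if_neg]
      intro hdq
      apply hne
      have : Quotient.mk (Equiv.Perm.SameCycle.setoid G.rot) q.out = q := Quotient.out_eq q
      rw [← this]
      exact Quotient.sound (G.sameVertex_symm hdq)
    · intro hnm
      exfalso
      apply hnm
      simp only [Finset.mem_filter, Finset.mem_univ, true_and]
      exact Relation.EqvGen.trans _ _ _ hc
        (G.comp_of_sameVertex (G.sameVertex_symm (G.out_sameVertex d)))
  · rw [if_neg hc]
    apply Finset.sum_eq_zero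
    intro q hq
    simp only [Finset.mem_filter, Finset.mem_univ, true_and] at hq
    unfold chiV
    rw [if_neg]
    intro hdq
    exact hc (Relation.EqvGen.trans _ _ _ hq
      (Relation.EqvGen.symm _ _ (G.comp_of_sameVertex hdq)))

end StarGraph

end LinAlg4
section LinAlg5

open Finset

open scoped Classical

namespace StarGraph

variable (G : StarGraph)

lemma out_comp (d : G.D) :
    Relation.EqvGen G.compRel (Quotient.mk (Relation.EqvGen.setoid G.compRel) d).out d :=
  Quotient.exact (Quotient.out_eq (Quotient.mk (Relation.EqvGen.setoid G.compRel) d))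

/-- The sum of an `edgeInv`-invariant function over a component vanishes. -/
lemma sum_comp_eq_zero {c : G.D → F2} (hc : c ∈ fixSubmodule G.edgeInv) (d : G.D) :
    ∑ x ∈ Finset.univ.filter (Relation.EqvGen G.compRel d), c x = 0 := by
  apply Finset.sum_involution (fun a _ => G.edgeInv a)
  · intro a _
    rw [hc a]
    exact F2.add_self (c a)
  · intro a _ _
    exact G.edgeInv_ne a
  · intro a ha
    simp only [Finset.mem_filter, Finset.mem_univ, true_and] at ha ⊢
    exact Relation.EqvGen.trans _ _ _ ha (G.comp_edgeInv a)
  · intro a _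
    exact G.edgeInv_invol a

lemma cSum_vSum_eq_zero {c : G.D → F2} (hc : c ∈ fixSubmodule G.edgeInv) :
    G.cSum (G.vSum c) = 0 := by
  funext d
  rw [cSum_apply]
  have hterm : ∀ q ∈ Finset.univ.filter
      (fun q : G.vQuot => Relation.EqvGen G.compRel d q.out),
      G.vSum c q.out = ∑ x ∈ Finset.univ.filter (G.rot.SameCycle q.out), c x :=
    fun q _ => G.vSum_apply c q.out
  rw [Finset.sum_congr rfl hterm]
  have hdisj : (Finset.univ.filter
      (fun q : G.vQuot => Relation.EqvGen G.compRel d q.out) : Set G.vQuot).PairwiseDisjoint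
      (fun q : G.vQuot => Finset.univ.filter (G.rot.SameCycle q.out)) := by
    intro q _ q' _ hne
    simp only [Function.onFun, Finset.disjoint_left, Finset.mem_filter, Finset.mem_univ,
      true_and]
    intro x hx hx'
    apply hne
    have h1 : Quotient.mk (Equiv.Perm.SameCycle.setoid G.rot) q.out = q := Quotient.out_eq q
    have h2 : Quotient.mk (Equiv.Perm.SameCycle.setoid G.rot) q'.out = q' := Quotient.out_eq q'
    rw [← h1, ← h2]
    exact Quotient.sound (hx.trans hx'.symm)
  rw [← Finset.sum_biUnion hdisj]
  have hcover : (Finset.univ.filter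
      (fun q : G.vQuot => Relation.EqvGen G.compRel d q.out)).biUnion
      (fun q : G.vQuot => Finset.univ.filter (G.rot.SameCycle q.out))
      = Finset.univ.filter (Relation.EqvGen G.compRel d) := by
    ext x
    simp only [Finset.mem_biUnion, Finset.mem_filter, Finset.mem_univ, true_and]
    constructor
    · rintro ⟨q, hq, hx⟩
      exact Relation.EqvGen.trans _ _ _ hq (G.comp_of_sameVertex hx)
    · intro hx
      refine ⟨Quotient.mk (Equiv.Perm.SameCycle.setoid G.rot) x, ?_, ?_⟩
      · exact Relation.EqvGen.trans _ _ _ hx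
          (G.comp_of_sameVertex (G.sameVertex_symm (G.out_sameVertex x)))
      · exact G.out_sameVertex x
  rw [hcover]
  have hzero : (0 : G.D → F2) d = 0 := rfl
  rw [hzero]
  exact G.sum_comp_eq_zero hc d

lemma range_cSum_eq :
    LinearMap.range (G.cSum ∘ₗ (fixSubmodule G.rot).subtype)
      = fixSubmodule G.rot ⊓ fixSubmodule G.edgeInv := by
  apply le_antisymm
  · rintro _ ⟨⟨f, hf⟩, rfl⟩
    exact G.cSum_mem_fix_inf f
  · intro h hmem
    set vS := Equiv.Perm.SameCycle.setoid G.rot with hvS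
    set cS := Relation.EqvGen.setoid G.compRel with hcS
    set c : G.D → F2 := fun d =>
      if Quotient.mk vS d = Quotient.mk vS (Quotient.mk cS d).out then h d else 0 with hc
    have hconst := (G.mem_fix_inf_iff).mp hmem
    have hrot : h ∈ fixSubmodule G.rot := hmem.1
    have hcfix : c ∈ fixSubmodule G.rot := by
      intro d
      have e1 : Quotient.mk vS (G.rot d) = Quotient.mk vS d :=
        Quotient.sound (G.sameVertex_rot d).symm
      have e2 : Quotient.mk cS (G.rot d) = Quotient.mk cS d :=
        Quotient.sound (Relation.EqvGen.symm _ _ (G.comp_rot d))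
      rw [hc]
      simp only [e1, e2, hrot d]
    refine ⟨⟨c, hcfix⟩, ?_⟩
    funext d
    have happ : (G.cSum ∘ₗ (fixSubmodule G.rot).subtype) ⟨c, hcfix⟩ d = G.cSum c d := rfl
    rw [happ, cSum_apply]
    set q₀ : G.vQuot := Quotient.mk vS (Quotient.mk cS d).out with hq₀
    have hq₀mem : Relation.EqvGen G.compRel d q₀.out := by
      refine Relation.EqvGen.trans _ _ _ (Relation.EqvGen.symm _ _ (G.out_comp d)) ?_
      exact Relation.EqvGen.symm _ _ (G.comp_of_sameVertex (G.out_sameVertex _))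
    rw [Finset.sum_eq_single_of_mem q₀ (by simpa using hq₀mem)]
    · have e1 : Quotient.mk vS q₀.out = q₀ := Quotient.out_eq q₀
      have e2 : Quotient.mk cS q₀.out = Quotient.mk cS d :=
        Quotient.sound (Relation.EqvGen.symm _ _ hq₀mem)
      rw [hc]
      simp only [e1, e2, ← hq₀]
      rw [if_pos trivial]
      exact hconst _ _ (Relation.EqvGen.symm _ _ hq₀mem)
    · intro q hq hne
      simp only [Finset.mem_filter, Finset.mem_univ, true_and] at hq
      have e1 : Quotient.mk vS q.out = q := Quotient.out_eq q
      have e2 : Quotient.mk cS q.out = Quotient.mk cS d :=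
        Quotient.sound (Relation.EqvGen.symm _ _ hq)
      rw [hc]
      simp only [e1, e2, ← hq₀]
      rw [if_neg hne]

end StarGraph

end LinAlg5
section LinAlg6

open Finset

open scoped Classical

lemma F2.eq_one_of_ne_zero {a : F2} (h : a ≠ 0) : a = 1 := by
  revert h
  revert a
  decide

lemma F2.cancel (A B C : F2) : (A + B) + (B + C) = A + C := by
  revert A B C
  decide

lemma F2.add_add_self (a b : F2) : (a + b) + b = a := by
  revert a b
  decide

lemma F2.one_add_one : (1 : F2) + 1 = 0 := by decide

namespace StarGraph

variable (G : StarGraph)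

/-- indicator of the edge of `a` -/
noncomputable def chiE (a : G.D) : G.D → F2 :=
  fun x => if x = a ∨ x = G.edgeInv a then 1 else 0

lemma chiE_mem_fixe (a : G.D) : G.chiE a ∈ fixSubmodule G.edgeInv := by
  intro x
  unfold chiE
  congr 1
  simp only [eq_iff_iff]
  have h1 : G.edgeInv x = a ↔ x = G.edgeInv a :=
    ⟨fun h => by rw [← h, G.edgeInv_invol], fun h => by rw [h, G.edgeInv_invol]⟩
  have h2 : G.edgeInv x = G.edgeInv a ↔ x = a := (G.edgeInv.injective).eq_iff
  rw [h1, h2, or_comm]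

lemma vSum_chiE (a : G.D) : G.vSum (G.chiE a) = G.chiV a + G.chiV (G.edgeInv a) := by
  funext d
  rw [Pi.add_apply, vSum_apply]
  have hsplit : ∀ x : G.D, G.chiE a x
      = (if x = a then (1 : F2) else 0) + (if x = G.edgeInv a then 1 else 0) := by
    intro x
    unfold chiE
    by_cases h1 : x = a
    · have h2 : x ≠ G.edgeInv a :=
        fun hh => G.edgeInv_ne a ((h1 ▸ hh : a = G.edgeInv a)).symm
      rw [if_pos (Or.inl h1), if_pos h1, if_neg h2]
      decide
    · by_cases h2 : x = G.edgeInv a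
      · rw [if_pos (Or.inr h2), if_neg h1, if_pos h2]
        decide
      · rw [if_neg (by tauto), if_neg h1, if_neg h2]
        decide
  rw [Finset.sum_congr rfl fun x _ => hsplit x, Finset.sum_add_distrib]
  have hterm : ∀ b : G.D,
      (∑ x ∈ Finset.univ.filter (G.rot.SameCycle d), if x = b then (1 : F2) else 0)
        = G.chiV b d := by
    intro b
    rw [Finset.sum_ite_eq' (Finset.univ.filter (G.rot.SameCycle d)) b (fun _ => (1 : F2))]
    unfold chiV
    congr 1
    simp only [Finset.mem_filter, Finset.mem_univ, true_and, eq_iff_iff]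
    exact ⟨fun h => h.symm, fun h => h.symm⟩
  rw [hterm a, hterm (G.edgeInv a)]

lemma dipole_mem {d₀ d₁ : G.D} (h : Relation.EqvGen G.compRel d₀ d₁) :
    G.chiV d₀ + G.chiV d₁
      ∈ LinearMap.range (G.vSum ∘ₗ (fixSubmodule G.edgeInv).subtype) := by
  induction h with
  | rel a b hab =>
    rcases hab with rfl | rfl
    · have h1 : G.chiV (G.rot a) = G.chiV a := (G.chiV_congr (G.sameVertex_rot a)).symm
      rw [h1]
      have h2 : G.chiV a + G.chiV a = 0 := funext fun x => F2.add_self _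
      rw [h2]
      exact zero_mem _
    · exact ⟨⟨G.chiE a, G.chiE_mem_fixe a⟩, G.vSum_chiE a⟩
  | refl a =>
    have h2 : G.chiV a + G.chiV a = 0 := funext fun x => F2.add_self _
    rw [h2]
    exact zero_mem _
  | symm a b _ ih =>
    rw [add_comm]
    exact ih
  | trans a b c _ _ ih1 ih2 =>
    have key : G.chiV a + G.chiV c = (G.chiV a + G.chiV b) + (G.chiV b + G.chiV c) := by
      funext x
      simp only [Pi.add_apply]
      exact (F2.cancel _ _ _).symm
    rw [key]
    exact add_mem ih1 ih2

lemma D0_le_range :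
    (fixSubmodule G.rot ⊓ LinearMap.ker G.cSum : Submodule F2 (G.D → F2))
      ≤ LinearMap.range (G.vSum ∘ₗ (fixSubmodule G.edgeInv).subtype) := by
  suffices H : ∀ n : ℕ, ∀ h : G.D → F2,
      h ∈ (fixSubmodule G.rot ⊓ LinearMap.ker G.cSum : Submodule F2 (G.D → F2)) →
      (Finset.univ.filter (fun x => h x ≠ 0)).card = n →
      h ∈ LinearMap.range (G.vSum ∘ₗ (fixSubmodule G.edgeInv).subtype) by
    intro h hmem
    exact H _ h hmem rfl
  intro n
  induction n using Nat.strong_induction_on with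
  | _ n ih =>
    intro h hmem hcard
    by_cases h0 : h = 0
    · rw [h0]
      exact zero_mem _
    obtain ⟨d₀, hd₀⟩ : ∃ d, h d ≠ 0 := Function.ne_iff.mp h0
    have hconstV : ∀ x y : G.D, G.SameVertex x y → h x = h y :=
      fun x y hxy => fixSubmodule_sameCycle hmem.1 hxy
    have hker : G.cSum h d₀ = 0 := by
      have h2 : G.cSum h = 0 := LinearMap.mem_ker.mp hmem.2
      rw [h2]
      rfl
    set vS := Equiv.Perm.SameCycle.setoid G.rot with hvS
    set q₀ : G.vQuot := Quotient.mk vS d₀ with hq₀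
    have hq₀out : h q₀.out = h d₀ := hconstV _ _ (G.out_sameVertex d₀)
    rw [cSum_apply] at hker
    have hq₀mem : q₀ ∈ Finset.univ.filter
        (fun q : G.vQuot => Relation.EqvGen G.compRel d₀ q.out) := by
      simp only [Finset.mem_filter, Finset.mem_univ, true_and]
      exact G.comp_of_sameVertex (G.sameVertex_symm (G.out_sameVertex d₀))
    obtain ⟨q₁, hq₁mem, hq₁ne, hq₁val⟩ : ∃ q₁ : G.vQuot, q₁ ∈ Finset.univ.filter
        (fun q : G.vQuot => Relation.EqvGen G.compRel d₀ q.out) ∧ q₁ ≠ q₀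
          ∧ h q₁.out ≠ 0 := by
      by_contra hno
      push_neg at hno
      have hsum : ∑ q ∈ Finset.univ.filter
          (fun q : G.vQuot => Relation.EqvGen G.compRel d₀ q.out), h q.out
            = h q₀.out :=
        Finset.sum_eq_single_of_mem q₀ hq₀mem (fun b hb hbne => hno b hb hbne)
      rw [hsum, hq₀out] at hker
      exact hd₀ hker
    have hcomp01 : Relation.EqvGen G.compRel d₀ q₁.out := by
      simpa using (Finset.mem_filter.mp hq₁mem).2
    set w : G.D → F2 := G.chiV d₀ + G.chiV q₁.out with hw
    have hwrange := G.dipole_mem hcomp01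
    have hvne : ¬ G.SameVertex d₀ q₁.out := by
      intro hsv
      apply hq₁ne
      rw [← Quotient.out_eq q₁, hq₀]
      exact Quotient.sound (G.sameVertex_symm hsv)
    have hw0 : w ∈ (fixSubmodule G.rot ⊓ LinearMap.ker G.cSum : Submodule F2 (G.D → F2)) := by
      constructor
      · exact add_mem (G.chiV_mem_fixrot d₀) (G.chiV_mem_fixrot q₁.out)
      · show G.cSum w = 0
        rw [hw, map_add]
        funext x
        rw [Pi.add_apply, cSum_chiV, cSum_chiV, Pi.zero_apply]
        have hiff : Relation.EqvGen G.compRel x d₀ ↔ Relation.EqvGen G.compRel x q₁.out :=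
          ⟨fun hh => Relation.EqvGen.trans _ _ _ hh hcomp01,
           fun hh => Relation.EqvGen.trans _ _ _ hh (Relation.EqvGen.symm _ _ hcomp01)⟩
        rw [if_congr hiff rfl rfl]
        split_ifs <;> decide
    have hval : ∀ x, (h + w) x
        = if G.SameVertex d₀ x ∨ G.SameVertex q₁.out x then 0 else h x := by
      intro x
      have hexp : (h + w) x = h x + (G.chiV d₀ x + G.chiV q₁.out x) := rfl
      rw [hexp]
      unfold chiV
      by_cases hx1 : G.SameVertex d₀ x <;> by_cases hx2 : G.SameVertex q₁.out x
      · exact absurd (hx1.trans hx2.symm) hvne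
      · have hx : h x = 1 := F2.eq_one_of_ne_zero (by
          rw [← hconstV d₀ x hx1]; exact hd₀)
        rw [if_pos hx1, if_neg hx2, if_pos (Or.inl hx1), hx]
        decide
      · have hx : h x = 1 := F2.eq_one_of_ne_zero (by
          rw [← hconstV q₁.out x hx2]; exact hq₁val)
        rw [if_neg hx1, if_pos hx2, if_pos (Or.inr hx2), hx]
        decide
      · rw [if_neg hx1, if_neg hx2, if_neg (by tauto)]
        simp
    have hsubset : Finset.univ.filter (fun x => (h + w) x ≠ 0)
        ⊆ Finset.univ.filter (fun x => h x ≠ 0) := by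
      intro x hx
      simp only [Finset.mem_filter, Finset.mem_univ, true_and] at hx ⊢
      rw [hval x] at hx
      by_cases hcond : G.SameVertex d₀ x ∨ G.SameVertex q₁.out x
      · rw [if_pos hcond] at hx
        exact absurd rfl hx
      · rwa [if_neg hcond] at hx
    have hssub : Finset.univ.filter (fun x => (h + w) x ≠ 0)
        ⊂ Finset.univ.filter (fun x => h x ≠ 0) := by
      rw [Finset.ssubset_iff_of_subset hsubset]
      refine ⟨d₀, ?_, ?_⟩
      · simp only [Finset.mem_filter, Finset.mem_univ, true_and]
        exact hd₀
      · simp only [Finset.mem_filter, Finset.mem_univ, true_and, not_not]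
        rw [hval d₀, if_pos (Or.inl (G.sameVertex_refl d₀))]
    have hlt : (Finset.univ.filter (fun x => (h + w) x ≠ 0)).card < n := by
      rw [← hcard]
      exact Finset.card_lt_card hssub
    have hrec := ih _ hlt (h + w) (add_mem hmem hw0) rfl
    have hfin : h = (h + w) + w := by
      funext x
      show h x = (h x + w x) + w x
      exact (F2.add_add_self _ _).symm
    rw [hfin]
    exact add_mem hrec hwrange

lemma range_vSum_eq :
    LinearMap.range (G.vSum ∘ₗ (fixSubmodule G.edgeInv).subtype)
      = (fixSubmodule G.rot ⊓ LinearMap.ker G.cSum : Submodule F2 (G.D → F2)) := by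
  apply le_antisymm
  · rintro _ ⟨⟨c, hc⟩, rfl⟩
    exact ⟨G.vSum_mem_fixrot c, LinearMap.mem_ker.mpr (G.cSum_vSum_eq_zero hc)⟩
  · exact G.D0_le_range

end StarGraph

end LinAlg6
section LinAlg7

open Finset

open scoped Classical

lemma F2.add_eq_zero_iff (a b : F2) : a + b = 0 ↔ b = a := by
  revert a b
  decide

lemma ker_addComp {α : Type*} [Fintype α] [DecidableEq α] (σ : Equiv.Perm α) :
    LinearMap.ker (addComp σ) = fixSubmodule σ := by
  ext g
  rw [LinearMap.mem_ker, mem_fixSubmodule]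
  rw [funext_iff]
  apply forall_congr'
  intro d
  rw [addComp_apply, Pi.zero_apply, F2.add_eq_zero_iff]

namespace StarGraph

variable {G : StarGraph} {ρ : Equiv.Perm G.D}

lemma fix_rho_eq (hc : G.IsCompatibleRotation ρ) :
    fixSubmodule ρ = fixSubmodule G.rot := by
  ext f
  rw [mem_fixSubmodule, mem_fixSubmodule]
  constructor
  · intro hf d
    exact (fixSubmodule_sameCycle hf ((G.sameCycle_rho_iff hc).mpr (G.sameVertex_rot d))).symm
  · intro hf d
    have h1 : G.SameVertex d (ρ d) := (G.sameCycle_rho_iff hc).mp ⟨1, by simp⟩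
    exact (fixSubmodule_sameCycle hf h1).symm

lemma fix_face_inf_eq (hc : G.IsCompatibleRotation ρ) :
    fixSubmodule (ρ * G.edgeInv) ⊓ fixSubmodule G.edgeInv
      = fixSubmodule G.rot ⊓ fixSubmodule G.edgeInv := by
  have hface : ∀ d, (ρ * G.edgeInv) (G.edgeInv d) = ρ d := by
    intro d
    show ρ (G.edgeInv (G.edgeInv d)) = ρ d
    rw [G.edgeInv_invol]
  ext f
  constructor
  · rintro ⟨h1, h2⟩
    refine ⟨?_, h2⟩
    rw [← fix_rho_eq hc]
    intro d
    calc f (ρ d) = f ((ρ * G.edgeInv) (G.edgeInv d)) := by rw [hface]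
      _ = f (G.edgeInv d) := h1 _
      _ = f d := h2 d
  · rintro ⟨h1, h2⟩
    have h1' : f ∈ fixSubmodule ρ := by rw [fix_rho_eq hc]; exact h1
    refine ⟨?_, h2⟩
    intro d
    calc f ((ρ * G.edgeInv) d) = f (ρ (G.edgeInv d)) := rfl
      _ = f (G.edgeInv d) := h1' _
      _ = f d := h2 d

lemma range_addComp_le (hc : G.IsCompatibleRotation ρ) :
    LinearMap.range (addComp G.edgeInv ∘ₗ (fixSubmodule (ρ * G.edgeInv)).subtype)
      ≤ fixSubmodule G.edgeInv ⊓ LinearMap.ker G.vSum := by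
  rintro _ ⟨⟨g, hg⟩, rfl⟩
  have happ : ∀ d, (addComp G.edgeInv ∘ₗ (fixSubmodule (ρ * G.edgeInv)).subtype) ⟨g, hg⟩ d
      = g d + g (G.edgeInv d) := fun d => rfl
  have hge : ∀ x, g (G.edgeInv x) = g (ρ x) := by
    intro x
    have := hg (G.edgeInv x)
    rw [show (ρ * G.edgeInv) (G.edgeInv x) = ρ x by
      show ρ (G.edgeInv (G.edgeInv x)) = ρ x; rw [G.edgeInv_invol]] at this
    exact this.symm
  constructor
  · intro d
    rw [happ, happ, G.edgeInv_invol]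
    exact add_comm _ _
  · show G.vSum ((addComp G.edgeInv ∘ₗ (fixSubmodule (ρ * G.edgeInv)).subtype) ⟨g, hg⟩) = 0
    funext d
    rw [Pi.zero_apply]
    have hsum : G.vSum (addComp G.edgeInv ∘ₗ (fixSubmodule (ρ * G.edgeInv)).subtype
        <| ⟨g, hg⟩) d = ∑ x ∈ Finset.univ.filter (G.rot.SameCycle d), (g x + g (G.edgeInv x)) := by
      rw [vSum_apply]
      exact Finset.sum_congr rfl fun x _ => happ x
    rw [hsum]
    rw [Finset.sum_congr rfl (fun x _ => by rw [hge x])]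
    rw [Finset.sum_add_distrib]
    have hre : ∑ x ∈ Finset.univ.filter (G.rot.SameCycle d), g (ρ x)
        = ∑ x ∈ Finset.univ.filter (G.rot.SameCycle d), g x := by
      apply Finset.sum_nbij' (fun x => ρ x) (fun x => ρ⁻¹ x)
      · intro a ha
        simp only [Finset.mem_filter, Finset.mem_univ, true_and] at ha ⊢
        have : G.SameVertex a (ρ a) := (G.sameCycle_rho_iff hc).mp ⟨1, by simp⟩
        exact ha.trans this
      · intro a ha
        simp only [Finset.mem_filter, Finset.mem_univ, true_and] at ha ⊢
        have : G.SameVertex a (ρ⁻¹ a) := (G.sameCycle_rho_iff hc).mp ⟨-1, by simp⟩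
        exact ha.trans this
      · intro a _
        simp
      · intro a _
        simp
      · intro a _
        rfl
    rw [hre]
    exact F2.add_self _

lemma exists_potential (hc : G.IsCompatibleRotation ρ)
    (hEuler : (G.numVertices : ℤ) - G.numEdges + G.numFaces ρ = 2 * G.numComponents)
    {c : G.D → F2} (hsym : c ∈ fixSubmodule G.edgeInv) (hker : G.vSum c = 0) :
    ∃ g : G.D → F2, (∀ x, g ((ρ * G.edgeInv) x) = g x) ∧ ∀ d, c d = g d + g (G.edgeInv d) := by
  have RN3 := finrank_inf_ker (fixSubmodule (ρ * G.edgeInv)) (addComp G.edgeInv)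
  rw [ker_addComp, fix_face_inf_eq hc, finrank_fixSubmodule, G.finrank_comp] at RN3
  have RN1 := finrank_inf_ker (fixSubmodule G.edgeInv) G.vSum
  rw [G.finrank_fix_edgeInv, G.range_vSum_eq] at RN1
  have RN2 := finrank_inf_ker (fixSubmodule G.rot) G.cSum
  rw [finrank_fixSubmodule, G.range_cSum_eq, G.finrank_comp] at RN2
  have hV : StarGraph.cycleCount G.rot = G.numVertices := rfl
  have hF : StarGraph.cycleCount (ρ * G.edgeInv) = G.numFaces ρ := rfl
  rw [hV] at RN2
  rw [hF] at RN3
  have hrank_eq : Module.finrank F2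
      ((fixSubmodule G.edgeInv ⊓ LinearMap.ker G.vSum : Submodule F2 (G.D → F2)))
      = Module.finrank F2 (LinearMap.range
          (addComp G.edgeInv ∘ₗ (fixSubmodule (ρ * G.edgeInv)).subtype)) := by
    omega
  have heq : fixSubmodule G.edgeInv ⊓ LinearMap.ker G.vSum
      = LinearMap.range (addComp G.edgeInv ∘ₗ (fixSubmodule (ρ * G.edgeInv)).subtype) := by
    have := Submodule.eq_of_le_of_finrank_le (range_addComp_le hc) hrank_eq.le
    exact this.symm
  have hcmem : c ∈ LinearMap.range
      (addComp G.edgeInv ∘ₗ (fixSubmodule (ρ * G.edgeInv)).subtype) := by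
    rw [← heq]
    exact ⟨hsym, LinearMap.mem_ker.mpr hker⟩
  obtain ⟨⟨g, hg⟩, hgc⟩ := hcmem
  refine ⟨g, hg, ?_⟩
  intro d
  rw [← hgc]
  rfl

end StarGraph

end LinAlg7
section MainCombinatorics

open Finset

open scoped Classical

namespace StarGraph

variable {G : StarGraph}

instance closedTrailNeZero (A : ClosedTrail G) : NeZero A.len := ⟨A.len_pos.ne'⟩

/-- The indicator function (mod 2) of the edge set of a closed trail. -/
noncomputable def chiS (A : ClosedTrail G) : G.D → F2 := fun x =>
  ∑ i : ZMod A.len,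
    ((if x = A.dart i then (1 : F2) else 0) + (if x = G.edgeInv (A.dart i) then 1 else 0))

lemma trail_next_sv (A : ClosedTrail G) (i : ZMod A.len) :
    G.SameVertex (G.edgeInv (A.dart (i - 1))) (A.dart i) := by
  have h := A.next_sameVertex (i - 1)
  rwa [sub_add_cancel] at h

lemma trail_ne (A : ClosedTrail G) (i : ZMod A.len) :
    G.edgeInv (A.dart (i - 1)) ≠ A.dart i := by
  intro h
  have h' : A.dart (i - 1) = G.edgeInv (A.dart i) := by
    have := congrArg G.edgeInv h
    rwa [G.edgeInv_invol] at this
  have heq := A.edges_injective (i - 1) i (Or.inr h')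
  rw [heq] at h
  exact G.edgeInv_ne _ h

lemma chiS_mem_fixe (A : ClosedTrail G) : chiS A ∈ fixSubmodule G.edgeInv := by
  intro x
  unfold chiS
  apply Finset.sum_congr rfl
  intro i _
  have h1 : (G.edgeInv x = A.dart i) ↔ (x = G.edgeInv (A.dart i)) :=
    ⟨fun h => by rw [← h, G.edgeInv_invol], fun h => by rw [h, G.edgeInv_invol]⟩
  have h2 : (G.edgeInv x = G.edgeInv (A.dart i)) ↔ (x = A.dart i) :=
    (G.edgeInv.injective).eq_iff
  rw [if_congr h1 rfl rfl, if_congr h2 rfl rfl, add_comm]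

lemma chiS_vSum (A : ClosedTrail G) : G.vSum (chiS A) = 0 := by
  funext d
  rw [vSum_apply, Pi.zero_apply]
  unfold chiS
  rw [Finset.sum_comm]
  have hterm : ∀ i : ZMod A.len,
      (∑ x ∈ Finset.univ.filter (G.rot.SameCycle d),
        ((if x = A.dart i then (1 : F2) else 0)
          + (if x = G.edgeInv (A.dart i) then 1 else 0)))
      = (if A.dart i ∈ Finset.univ.filter (G.rot.SameCycle d) then (1 : F2) else 0)
        + (if G.edgeInv (A.dart i) ∈ Finset.univ.filter (G.rot.SameCycle d)
            then (1 : F2) else 0) := by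
    intro i
    rw [Finset.sum_add_distrib,
      Finset.sum_ite_eq' (Finset.univ.filter (G.rot.SameCycle d)) (A.dart i)
        (fun _ => (1 : F2)),
      Finset.sum_ite_eq' (Finset.univ.filter (G.rot.SameCycle d)) (G.edgeInv (A.dart i))
        (fun _ => (1 : F2))]
  rw [Finset.sum_congr rfl fun i _ => hterm i, Finset.sum_add_distrib]
  have hsecond : ∀ i : ZMod A.len,
      (if G.edgeInv (A.dart i) ∈ Finset.univ.filter (G.rot.SameCycle d) then (1 : F2) else 0)
      = (if A.dart (i + 1) ∈ Finset.univ.filter (G.rot.SameCycle d) then (1 : F2) else 0) := by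
    intro i
    have hsv : G.SameVertex (G.edgeInv (A.dart i)) (A.dart (i + 1)) := A.next_sameVertex i
    refine if_congr ?_ rfl rfl
    simp only [Finset.mem_filter, Finset.mem_univ, true_and]
    exact ⟨fun h => h.trans hsv, fun h => h.trans hsv.symm⟩
  rw [Finset.sum_congr rfl fun i _ => hsecond i]
  have hre : (∑ i : ZMod A.len,
      if A.dart (i + 1) ∈ Finset.univ.filter (G.rot.SameCycle d) then (1 : F2) else 0)
      = ∑ i : ZMod A.len,
        if A.dart i ∈ Finset.univ.filter (G.rot.SameCycle d) then (1 : F2) else 0 :=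
    Fintype.sum_equiv (Equiv.addRight (1 : ZMod A.len)) _ _ (fun i => rfl)
  rw [hre]
  exact F2.add_self _

end StarGraph

end MainCombinatorics
section MainRowSum

open Finset

open scoped Classical

lemma F2.telescope (f : ℕ → F2) (m : ℕ) (hm : 1 ≤ m) :
    ∑ k ∈ Finset.Ico 1 m, (f k + f (k + 1)) = f 1 + f m := by
  induction m, hm using Nat.le_induction with
  | base =>
    rw [Finset.Ico_self, Finset.sum_empty]
    exact (F2.add_self _).symm
  | succ n hn ih =>
    rw [Finset.sum_Ico_succ_top hn, ih]
    exact F2.cancel _ _ _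

namespace StarGraph

variable {G : StarGraph}

lemma row_sum (A B : ClosedTrail G) (hdisj : A.EdgeDisjoint B) {ρ : Equiv.Perm G.D}
    (hc : G.IsCompatibleRotation ρ)
    (g : G.D → F2) (hgφ : ∀ x, g ((ρ * G.edgeInv) x) = g x)
    (hchi : ∀ d, chiS A d = g d + g (G.edgeInv d)) (j : ZMod B.len) :
    (∑ i : ZMod A.len, if A.IsCrossing B (i, j) then (1 : F2) else 0)
      = g (B.dart (j - 1)) + g (B.dart j) := by
  have hgρ : ∀ y, g (ρ y) = g (G.edgeInv y) := by
    intro y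
    have h := hgφ (G.edgeInv y)
    rwa [show (ρ * G.edgeInv) (G.edgeInv y) = ρ y by
      show ρ (G.edgeInv (G.edgeInv y)) = ρ y
      rw [G.edgeInv_invol]] at h
  set B₁ := G.edgeInv (B.dart (j - 1)) with hB₁
  set B₂ := B.dart j with hB₂
  have hB12 : G.SameVertex B₁ B₂ := trail_next_sv B j
  have hB12ne : B₁ ≠ B₂ := trail_ne B j
  have hSCB12 : ρ.SameCycle B₁ B₂ := (G.sameCycle_rho_iff hc).mpr hB12
  set m := stepsTo ρ B₁ B₂ with hm
  have hm1 : 0 < m := stepsTo_pos hSCB12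
  have hmn : m < per ρ B₁ := stepsTo_lt_per hSCB12 (Ne.symm hB12ne)
  set aI : G.D → F2 :=
    fun x => if (ρ.SameCycle B₁ x ∧ stepsTo ρ B₁ x < m) then 1 else 0 with haI
  -- Step 1: crossing indicator as sum of arc indicators
  have hstep1 : ∀ i : ZMod A.len,
      (if A.IsCrossing B (i, j) then (1 : F2) else 0)
      = aI (G.edgeInv (A.dart (i - 1))) + aI (A.dart i) := by
    intro i
    set A₁ := G.edgeInv (A.dart (i - 1)) with hA₁
    set A₂ := A.dart i with hA₂
    have hA12 : G.SameVertex A₁ A₂ := trail_next_sv A i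
    by_cases hSV : G.SameVertex A₂ B₂
    · have hA12ne : A₁ ≠ A₂ := trail_ne A i
      have d5 : A₁ ≠ B₁ := fun h => (hdisj (i - 1) (j - 1)).1 (G.edgeInv.injective h)
      have d6 : A₁ ≠ B₂ := fun h => (hdisj (i - 1) j).2 (by
        have h2 := congrArg G.edgeInv h
        rw [hA₁, G.edgeInv_invol] at h2
        exact h2)
      have d7 : A₂ ≠ B₁ := fun h => (hdisj i (j - 1)).2 h
      have d8 : A₂ ≠ B₂ := fun h => (hdisj i j).1 h
      have sA1B2 : G.SameVertex A₁ B₂ := hA12.trans hSV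
      have sA1B1 : G.SameVertex A₁ B₁ := sA1B2.trans hB12.symm
      have sB1A1 : G.SameVertex B₁ A₁ := sA1B1.symm
      have sB1A2 : G.SameVertex B₁ A₂ := sB1A1.trans hA12
      have hcr : A.IsCrossing B (i, j) ↔ Alternating G.rot A₁ A₂ B₁ B₂ :=
        ⟨fun h => h.2, fun h => ⟨hSV, h⟩⟩
      have halt : Alternating G.rot A₁ A₂ B₁ B₂ ↔ Alternating ρ A₁ A₂ B₁ B₂ :=
        (G.alternating_rho_iff hc hA12 sA1B1 sA1B2 hA12ne.symm d5.symm d6.symm).symm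
      have hsymm : Alternating ρ A₁ A₂ B₁ B₂ ↔
          ¬ ((stepsTo ρ B₁ A₁ < stepsTo ρ B₁ B₂) ↔ (stepsTo ρ B₁ A₂ < stepsTo ρ B₁ B₂)) :=
        alternating_symm ((G.sameCycle_rho_iff hc).mpr sB1A1)
          ((G.sameCycle_rho_iff hc).mpr sB1A2) hSCB12
          d5 d7 (Ne.symm hB12ne) (Ne.symm hA12ne) (Ne.symm d8) (Ne.symm d6)
      rw [if_congr (hcr.trans (halt.trans hsymm)) rfl rfl]
      rw [haI]
      simp only []
      rw [if_congr (and_iff_right ((G.sameCycle_rho_iff hc).mpr sB1A1)) rfl rfl,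
        if_congr (and_iff_right ((G.sameCycle_rho_iff hc).mpr sB1A2)) rfl rfl]
      by_cases hp : stepsTo ρ B₁ A₁ < m <;> by_cases hq : stepsTo ρ B₁ A₂ < m
      · rw [if_neg (by tauto), if_pos hp, if_pos hq]
        decide
      · rw [if_pos (by tauto), if_pos hp, if_neg hq]
        decide
      · rw [if_pos (by tauto), if_neg hp, if_pos hq]
        decide
      · rw [if_neg (by tauto), if_neg hp, if_neg hq]
        decide
    · have hno2 : ¬ ρ.SameCycle B₁ A₂ := by
        intro hsc
        exact hSV (((G.sameCycle_rho_iff hc).mp hsc).symm.trans hB12)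
      have hno1 : ¬ ρ.SameCycle B₁ A₁ := by
        intro hsc
        exact hno2 (hsc.trans ((G.sameCycle_rho_iff hc).mpr hA12))
      rw [if_neg (fun hcr : A.IsCrossing B (i, j) => hSV hcr.1), haI]
      simp only []
      rw [if_neg (fun hh => hno1 hh.1), if_neg (fun hh => hno2 hh.1)]
      decide
  rw [Finset.sum_congr rfl fun i _ => hstep1 i, Finset.sum_add_distrib]
  -- Step 2: reindex the incoming darts
  have hre : (∑ i : ZMod A.len, aI (G.edgeInv (A.dart (i - 1))))
      = ∑ i : ZMod A.len, aI (G.edgeInv (A.dart i)) :=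
    Fintype.sum_equiv (Equiv.subRight (1 : ZMod A.len)) _ _ (fun i => rfl)
  rw [hre, ← Finset.sum_add_distrib]
  -- Step 3: rewrite as a weighted sum over all darts
  have hstep3 : (∑ i : ZMod A.len, (aI (G.edgeInv (A.dart i)) + aI (A.dart i)))
      = ∑ x : G.D, chiS A x * aI x := by
    have hpt : ∀ x : G.D, chiS A x * aI x = ∑ i : ZMod A.len,
        ((if x = A.dart i then (1 : F2) else 0) * aI x
          + (if x = G.edgeInv (A.dart i) then (1 : F2) else 0) * aI x) := by
      intro x
      unfold chiS
      rw [Finset.sum_mul]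
      exact Finset.sum_congr rfl fun i _ => add_mul _ _ _
    rw [Finset.sum_congr rfl fun x _ => hpt x, Finset.sum_comm]
    apply Finset.sum_congr rfl
    intro i _
    rw [Finset.sum_add_distrib]
    have h1 : (∑ x : G.D, (if x = A.dart i then (1 : F2) else 0) * aI x) = aI (A.dart i) := by
      rw [Finset.sum_congr rfl fun x _ => by rw [ite_mul, one_mul, zero_mul]]
      rw [Finset.sum_ite_eq' Finset.univ (A.dart i) aI, if_pos (Finset.mem_univ _)]
    have h2 : (∑ x : G.D, (if x = G.edgeInv (A.dart i) then (1 : F2) else 0) * aI x)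
        = aI (G.edgeInv (A.dart i)) := by
      rw [Finset.sum_congr rfl fun x _ => by rw [ite_mul, one_mul, zero_mul]]
      rw [Finset.sum_ite_eq' Finset.univ (G.edgeInv (A.dart i)) aI,
        if_pos (Finset.mem_univ _)]
    rw [h1, h2]
    exact add_comm _ _
  rw [hstep3]
  -- Step 4: restrict to the arc and telescope
  have hchi' : ∀ x, chiS A x * aI x = (g x + g (G.edgeInv x)) * aI x :=
    fun x => by rw [hchi x]
  rw [Finset.sum_congr rfl fun x _ => hchi' x]
  have hfilter : (∑ x : G.D, (g x + g (G.edgeInv x)) * aI x)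
      = ∑ x ∈ Finset.univ.filter
          (fun x => ρ.SameCycle B₁ x ∧ stepsTo ρ B₁ x < m), (g x + g (G.edgeInv x)) := by
    rw [Finset.sum_filter]
    apply Finset.sum_congr rfl
    intro x _
    rw [haI]
    simp only []
    rw [mul_ite, mul_one, mul_zero]
  rw [hfilter]
  have hbij : (∑ x ∈ Finset.univ.filter
        (fun x => ρ.SameCycle B₁ x ∧ stepsTo ρ B₁ x < m), (g x + g (G.edgeInv x)))
      = ∑ k ∈ Finset.Ico 1 m, (g ((ρ ^ k) B₁) + g (G.edgeInv ((ρ ^ k) B₁))) := by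
    apply Finset.sum_nbij' (fun x => stepsTo ρ B₁ x) (fun k => (ρ ^ k) B₁)
    · intro x hx
      simp only [Finset.mem_filter, Finset.mem_univ, true_and] at hx
      rw [Finset.mem_Ico]
      exact ⟨stepsTo_pos hx.1, hx.2⟩
    · intro k hk
      rw [Finset.mem_Ico] at hk
      simp only [Finset.mem_filter, Finset.mem_univ, true_and]
      have hsc : ρ.SameCycle B₁ ((ρ ^ k) B₁) := ⟨k, by rw [zpow_natCast]⟩
      have hst : stepsTo ρ B₁ ((ρ ^ k) B₁) = k :=
        stepsTo_unique hk.1 (by omega) rfl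
      exact ⟨hsc, by rw [hst]; exact hk.2⟩
    · intro x hx
      simp only [Finset.mem_filter, Finset.mem_univ, true_and] at hx
      exact pow_stepsTo hx.1
    · intro k hk
      rw [Finset.mem_Ico] at hk
      exact stepsTo_unique hk.1 (by omega) rfl
    · intro x hx
      simp only [Finset.mem_filter, Finset.mem_univ, true_and] at hx
      rw [pow_stepsTo hx.1]
  rw [hbij]
  have hterm : ∀ k, g ((ρ ^ k) B₁) + g (G.edgeInv ((ρ ^ k) B₁))
      = g ((ρ ^ k) B₁) + g ((ρ ^ (k + 1)) B₁) := by
    intro k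
    rw [← hgρ ((ρ ^ k) B₁), pow_succ', Equiv.Perm.mul_apply]
  rw [Finset.sum_congr rfl fun k _ => hterm k]
  rw [F2.telescope (fun k => g ((ρ ^ k) B₁)) m hm1]
  have hf1 : g ((ρ ^ 1) B₁) = g (B.dart (j - 1)) := by
    rw [pow_one, hgρ, hB₁, G.edgeInv_invol]
  have hfm : g ((ρ ^ m) B₁) = g (B.dart j) := by
    rw [pow_stepsTo hSCB12]
  rw [hf1, hfm]

end StarGraph

end MainRowSum
/-- A *-graph containing a Vassiliev obstruct admits no *-embedding into the
plane. -/
theorem not_starPlanar_of_vassilievObstruct (G : StarGraph)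
    (h : HasVassilievObstruct G) : ¬ G.StarPlanar := by
  classical
  rintro ⟨ρ, hcomp, hEuler⟩
  obtain ⟨A, B, hdisj, hcount⟩ := h
  obtain ⟨g, hgφ, hchi⟩ := StarGraph.exists_potential hcomp hEuler
    (StarGraph.chiS_mem_fixe A) (StarGraph.chiS_vSum A)
  have htot : (∑ p : ZMod A.len × ZMod B.len,
      if A.IsCrossing B p then (1 : F2) else 0) = 0 := by
    rw [Fintype.sum_prod_type]
    rw [Finset.sum_comm]
    have hrow : ∀ j : ZMod B.len,
        (∑ i : ZMod A.len, if A.IsCrossing B (i, j) then (1 : F2) else 0)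
          = g (B.dart (j - 1)) + g (B.dart j) :=
      fun j => StarGraph.row_sum A B hdisj hcomp g hgφ hchi j
    rw [Finset.sum_congr rfl fun j _ => hrow j, Finset.sum_add_distrib]
    have hre : (∑ j : ZMod B.len, g (B.dart (j - 1))) = ∑ j : ZMod B.len, g (B.dart j) :=
      Fintype.sum_equiv (Equiv.subRight (1 : ZMod B.len)) _ _ (fun j => rfl)
    rw [hre]
    exact F2.add_self _
  have hone : (∑ p : ZMod A.len × ZMod B.len,
      if A.IsCrossing B p then (1 : F2) else 0) = 1 := by
    rw [Finset.sum_boole]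
    have hcard : (Finset.univ.filter
        (fun p : ZMod A.len × ZMod B.len => A.IsCrossing B p)).card = 1 := by
      rw [← Fintype.card_subtype, ← Nat.card_eq_fintype_card]
      exact hcount
    rw [hcard]
    norm_num
  rw [htot] at hone
  exact absurd hone (by decide)
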